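/- For every real number δ ≥ 0, one has e^δ / (1+δ)^{1+δ} ≤ exp(−δ² / (2 + δ)); equivalently, δ − (1+δ)·log(1+δ) ≤ −δ²/(2+δ). -/

import Mathlib

/-- Key: for `t ≥ 0`, `exp (2t) * (1 - t) ≤ 1 + t`. -/
lemma key_exp_ineq (t : ℝ) (ht : 0 ≤ t) : Real.exp (2 * t) * (1 - t) ≤ 1 + t := by
  have hmono : MonotoneOn (fun x : ℝ => (1 + x) - Real.exp (2 * x) * (1 - x)) (Set.Ici 0) := by
    apply monotoneOn_of_deriv_nonneg (convex_Ici 0)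
    · fun_prop
    · intro x hx
      apply DifferentiableAt.differentiableWithinAt
      fun_prop
    · intro x hx
      have h1 : HasDerivAt (fun x : ℝ => 1 + x) 1 x := by
        simpa using (hasDerivAt_id x).const_add 1
      have h2 : HasDerivAt (fun x : ℝ => Real.exp (2 * x)) (Real.exp (2 * x) * 2) x := by
        simpa using ((hasDerivAt_id x).const_mul 2).exp
      have h3 : HasDerivAt (fun x : ℝ => (1 : ℝ) - x) (-1) x := by
        simpa using (hasDerivAt_id x).const_sub 1
      have hd : HasDerivAt (fun x : ℝ => (1 + x) - Real.exp (2 * x) * (1 - x))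
          (1 - (Real.exp (2 * x) * 2 * (1 - x) + Real.exp (2 * x) * (-1))) x :=
        h1.sub (h2.mul h3)
      rw [hd.deriv]
      have hexp : 1 - 2 * x ≤ Real.exp (-(2 * x)) := by
        have := Real.add_one_le_exp (-(2 * x)); linarith
      have hpos : 0 < Real.exp (2 * x) := Real.exp_pos _
      have hmul : Real.exp (2 * x) * (1 - 2 * x) ≤ 1 := by
        have h := mul_le_mul_of_nonneg_left hexp hpos.le
        rw [← Real.exp_add] at h
        simpa using h
      nlinarith
  have h0 : (fun x : ℝ => (1 + x) - Real.exp (2 * x) * (1 - x)) 0 = 0 := by simp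
  have := hmono (Set.self_mem_Ici) (Set.mem_Ici.mpr ht) ht
  simp only [h0] at this
  linarith [this]

/-- For every real `δ ≥ 0`, one has `e^δ / (1+δ)^{1+δ} ≤ exp(−δ² / (2 + δ))`;
equivalently, `δ − (1+δ)·log(1+δ) ≤ −δ²/(2+δ)`. -/
theorem exp_div_rpow_le (δ : ℝ) (hδ : 0 ≤ δ) :
    Real.exp δ / (1 + δ) ^ (1 + δ) ≤ Real.exp (-δ ^ 2 / (2 + δ)) ∧
    δ - (1 + δ) * Real.log (1 + δ) ≤ -δ ^ 2 / (2 + δ) := by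
  have h2δ : (0:ℝ) < 2 + δ := by linarith
  have h1δ : (0:ℝ) < 1 + δ := by linarith
  set t : ℝ := δ / (2 + δ) with ht_def
  have ht : 0 ≤ t := div_nonneg hδ h2δ.le
  have hkey := key_exp_ineq t ht
  have h1mt : 1 - t = 2 / (2 + δ) := by rw [ht_def, eq_div_iff h2δ.ne', sub_mul, div_mul_cancel₀ _ h2δ.ne']; ring
  have h1pt : 1 + t = (2 + 2 * δ) / (2 + δ) := by rw [ht_def, eq_div_iff h2δ.ne', add_mul, div_mul_cancel₀ _ h2δ.ne']; ring
  have h1mtpos : (0:ℝ) < 1 - t := by rw [h1mt]; positivity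
  have hexp_le : Real.exp (2 * t) ≤ 1 + δ := by
    have h := (le_div_iff₀ h1mtpos).mpr hkey
    have heq : (1 + t) / (1 - t) = 1 + δ := by
      rw [h1mt, h1pt]
      field_simp
    rwa [heq] at h
  have hlog : 2 * t ≤ Real.log (1 + δ) :=
    (Real.le_log_iff_exp_le h1δ).mpr hexp_le
  have hlog' : 2 * δ ≤ (2 + δ) * Real.log (1 + δ) := by
    rw [ht_def, ← mul_div_assoc] at hlog
    have h := (div_le_iff₀ h2δ).mp hlog
    nlinarith
  have hlogpos : 0 ≤ Real.log (1 + δ) := Real.log_nonneg (by linarith)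
  have hpart2 : δ - (1 + δ) * Real.log (1 + δ) ≤ -δ ^ 2 / (2 + δ) := by
    rw [le_div_iff₀ h2δ]
    nlinarith [mul_le_mul_of_nonneg_left hlog' h1δ.le]
  refine ⟨?_, hpart2⟩
  rw [Real.rpow_def_of_pos h1δ, ← Real.exp_sub]
  apply Real.exp_le_exp.mpr
  rw [mul_comm (Real.log (1 + δ))]
  exact hpart2
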